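/- Let m be a positive integer and let H be a subgroup of (ℤ/mℤ)ˣ containing the class of −1. Then the subgroup of SL(2,ℤ) generated by the matrix with rows (1, 0) and (m, 1), the matrix −I (the negative of the identity), and all matrices in SL(2,ℤ) with top row (c, a) and bottom row (d, b) satisfying a > 0, m ∣ d, and (b mod m) ∈ H, is exactly the set of all matrices in Γ₀(m) whose lower-right entry reduces modulo m to an element of H. -/

import Mathlib

open Matrix CongruenceSubgroup

private def Tm (m : ℕ) : SpecialLinearGroup (Fin 2) ℤ :=
  ⟨!![1, 0; (m : ℤ), 1], by norm_num [Matrix.det_fin_two_of]⟩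

private def negI : SpecialLinearGroup (Fin 2) ℤ :=
  ⟨(-1 : Matrix (Fin 2) (Fin 2) ℤ), by norm_num [Matrix.det_neg, Fintype.card_fin]⟩

private lemma Tm_zpow (m : ℕ) : ∀ k : ℤ,
    ((Tm m) ^ k : SpecialLinearGroup (Fin 2) ℤ).1 = !![1, 0; k * (m : ℤ), 1] := by
  have hinv : ((Tm m)⁻¹ : SpecialLinearGroup (Fin 2) ℤ).1 = !![1, 0; -(m : ℤ), 1] := by
    rw [SpecialLinearGroup.SL2_inv_expl]
    ext i j
    fin_cases i <;> fin_cases j <;> simp [Tm]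
  intro k
  induction k using Int.induction_on with
  | zero => simp [Matrix.one_fin_two]
  | succ n ih =>
      rw [_root_.zpow_add_one]
      change ((Tm m ^ (n : ℤ) : SpecialLinearGroup (Fin 2) ℤ).1 * (Tm m).1) = _
      rw [ih]
      ext i j
      fin_cases i <;> fin_cases j <;>
        simp [Tm, Matrix.mul_apply, Fin.sum_univ_two] <;> ring
  | pred n ih =>
      rw [_root_.zpow_sub_one]
      change ((Tm m ^ (-(n : ℤ)) : SpecialLinearGroup (Fin 2) ℤ).1 *
        ((Tm m)⁻¹ : SpecialLinearGroup (Fin 2) ℤ).1) = _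
      rw [ih, hinv]
      ext i j
      fin_cases i <;> fin_cases j <;>
        simp [Matrix.mul_apply, Fin.sum_univ_two] <;> ring

/-- The target subgroup. -/
private def Kgrp (m : ℕ) (H : Subgroup (ZMod m)ˣ) : Subgroup (SpecialLinearGroup (Fin 2) ℤ) where
  carrier := {A : SpecialLinearGroup (Fin 2) ℤ |
          (m : ℤ) ∣ A 1 0 ∧
            ∃ u ∈ H, ((u : (ZMod m)ˣ) : ZMod m) = ((A 1 1 : ℤ) : ZMod m)}
  one_mem' := by
    refine ⟨by simp, 1, H.one_mem, by simp⟩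
  mul_mem' := by
    rintro A B ⟨hdA, u, hu, hcu⟩ ⟨hdB, v, hv, hcv⟩
    have h10 : ((A * B) 1 0 : ℤ) = A 1 0 * B 0 0 + A 1 1 * B 1 0 := by
      simp [SpecialLinearGroup.coe_mul, Matrix.mul_apply, Fin.sum_univ_two]
    have h11 : ((A * B) 1 1 : ℤ) = A 1 0 * B 0 1 + A 1 1 * B 1 1 := by
      simp [SpecialLinearGroup.coe_mul, Matrix.mul_apply, Fin.sum_univ_two]
    have hA0 : ((A 1 0 : ℤ) : ZMod m) = 0 := (ZMod.intCast_zmod_eq_zero_iff_dvd _ _).mpr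
      (by exact_mod_cast hdA)
    refine ⟨by rw [h10]; exact dvd_add (hdA.mul_right _) (hdB.mul_left _), u * v,
      H.mul_mem hu hv, ?_⟩
    rw [h11]
    push_cast
    rw [hA0, hcu, hcv]
    ring
  inv_mem' := by
    rintro A ⟨hdA, u, hu, hcu⟩
    have hi : A⁻¹ = (⟨!![A 1 1, -(A 0 1); -(A 1 0), A 0 0],
        SpecialLinearGroup.SL2_inv_expl_det A⟩ : SpecialLinearGroup (Fin 2) ℤ) := by
      rw [SpecialLinearGroup.SL2_inv_expl]; rfl
    have h10 : (A⁻¹ 1 0 : ℤ) = -(A 1 0) := by rw [hi]; rfl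
    have h11 : (A⁻¹ 1 1 : ℤ) = A 0 0 := by rw [hi]; rfl
    have hdet : A 0 0 * A 1 1 - A 0 1 * A 1 0 = 1 := by
      have := A.2; rwa [Matrix.det_fin_two] at this
    have hA0 : ((A 1 0 : ℤ) : ZMod m) = 0 := (ZMod.intCast_zmod_eq_zero_iff_dvd _ _).mpr
      (by exact_mod_cast hdA)
    have hmod : ((A 0 0 : ℤ) : ZMod m) * ((A 1 1 : ℤ) : ZMod m) = 1 := by
      have := congrArg (fun z : ℤ => (z : ZMod m)) hdet
      push_cast at this
      rw [hA0] at this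
      simpa using this
    refine ⟨by rw [h10]; exact hdA.neg_right, u⁻¹, H.inv_mem hu, ?_⟩
    rw [h11]
    have key : ((A 0 0 : ℤ) : ZMod m) * (u : ZMod m) = 1 := by rw [hcu]; exact hmod
    calc ((u⁻¹ : (ZMod m)ˣ) : ZMod m)
        = ((A 0 0 : ℤ) : ZMod m) * (u : ZMod m) * ((u⁻¹ : (ZMod m)ˣ) : ZMod m) := by
          rw [key, one_mul]
      _ = ((A 0 0 : ℤ) : ZMod m) := by
          rw [mul_assoc]
          norm_cast
          simp

private lemma key_lemma (m : ℕ) (H : Subgroup (ZMod m)ˣ)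
    (hneg : (-1 : (ZMod m)ˣ) ∈ H)
    (gens : Set (SpecialLinearGroup (Fin 2) ℤ))
    (hT : Tm m ∈ gens) (hI : negI ∈ gens)
    (hS : {A : SpecialLinearGroup (Fin 2) ℤ |
              0 < A 0 1 ∧ (m : ℤ) ∣ A 1 0 ∧
                ∃ u ∈ H, ((u : (ZMod m)ˣ) : ZMod m) = ((A 1 1 : ℤ) : ZMod m)} ⊆ gens)
    (A : SpecialLinearGroup (Fin 2) ℤ) (hd : (m : ℤ) ∣ A 1 0)
    (hub : ∃ u ∈ H, ((u : (ZMod m)ˣ) : ZMod m) = ((A 1 1 : ℤ) : ZMod m)) :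
    A ∈ Subgroup.closure gens := by
  obtain ⟨u, hu, hcu⟩ := hub
  have hTmem : Tm m ∈ Subgroup.closure gens := Subgroup.subset_closure hT
  have hnegImem : negI ∈ Subgroup.closure gens := Subgroup.subset_closure hI
  rcases lt_trichotomy (A 0 1) 0 with hlt | heq | hgt
  · -- A = negI * (-A)
    have hnegdet : (-(A : Matrix (Fin 2) (Fin 2) ℤ)).det = 1 := by
      rw [Matrix.det_neg]; simp [A.2]
    set B : SpecialLinearGroup (Fin 2) ℤ := ⟨-(A : Matrix (Fin 2) (Fin 2) ℤ), hnegdet⟩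
      with hB
    have hBmem : B ∈ Subgroup.closure gens := by
      apply Subgroup.subset_closure
      apply hS
      have hnegu : -u ∈ H := by rw [← neg_one_mul]; exact H.mul_mem hneg hu
      refine ⟨?_, ?_, -u, hnegu, ?_⟩
      · show (0 : ℤ) < -(A 0 1); omega
      · show (m : ℤ) ∣ -(A 1 0); exact hd.neg_right
      · show ((-u : (ZMod m)ˣ) : ZMod m) = ((-(A 1 1) : ℤ) : ZMod m)
        rw [Units.val_neg, hcu]
        push_cast
        ring
    have : A = negI * B := by
      apply Subtype.ext
      show (A : Matrix (Fin 2) (Fin 2) ℤ) = (-1) * (-(A : Matrix (Fin 2) (Fin 2) ℤ))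
      simp
    rw [this]
    exact Subgroup.mul_mem _ hnegImem hBmem
  · -- A 0 1 = 0 : A is ± a power of Tm
    have hdet : A 0 0 * A 1 1 - A 0 1 * A 1 0 = 1 := by
      have := A.2; rwa [Matrix.det_fin_two] at this
    rw [heq] at hdet
    have hmul : A 0 0 * A 1 1 = 1 := by linarith
    obtain ⟨k, hk⟩ := hd
    rcases Int.eq_one_or_neg_one_of_mul_eq_one' hmul with ⟨h00, h11⟩ | ⟨h00, h11⟩
    · have : A = (Tm m) ^ k := by
        apply Subtype.ext
        rw [Tm_zpow]
        rw [Matrix.eta_fin_two (A : Matrix (Fin 2) (Fin 2) ℤ)]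
        show !![A 0 0, A 0 1; A 1 0, A 1 1] = _
        rw [h00, h11, heq, hk]; ring_nf
      rw [this]
      exact Subgroup.zpow_mem _ hTmem k
    · have : A = negI * (Tm m) ^ (-k) := by
        apply Subtype.ext
        show (A : Matrix (Fin 2) (Fin 2) ℤ) = (-1) * _
        rw [Tm_zpow]
        rw [Matrix.eta_fin_two (A : Matrix (Fin 2) (Fin 2) ℤ)]
        show !![A 0 0, A 0 1; A 1 0, A 1 1] = _
        rw [h00, h11, heq, hk]
        ext i j
        fin_cases i <;> fin_cases j <;> simp <;> ring
      rw [this]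
      exact Subgroup.mul_mem _ hnegImem (Subgroup.zpow_mem _ hTmem (-k))
  · exact Subgroup.subset_closure (hS ⟨hgt, hd, u, hu, hcu⟩)

/-- For `m > 0` and a subgroup `H` of `(ℤ/mℤ)ˣ` containing `-1`, the subgroup of `SL(2,ℤ)`
generated by `[[1,0],[m,1]]`, `-I`, and all matrices `[[c,a],[d,b]]` in `SL(2,ℤ)` with `a > 0`,
`m ∣ d` and `(b mod m) ∈ H`, is exactly the set of matrices of `Γ₀(m)` whose lower-right entry
reduces mod `m` to an element of `H`. -/
theorem stmt2 (m : ℕ) (hm : 0 < m) (H : Subgroup (ZMod m)ˣ)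
    (hneg : (-1 : (ZMod m)ˣ) ∈ H) :
    (Subgroup.closure
        (({(⟨!![1, 0; (m : ℤ), 1], by norm_num [Matrix.det_fin_two_of]⟩ :
              SpecialLinearGroup (Fin 2) ℤ)} :
            Set (SpecialLinearGroup (Fin 2) ℤ))
          ∪ {(⟨(-1 : Matrix (Fin 2) (Fin 2) ℤ), by
                norm_num [Matrix.det_neg, Fintype.card_fin]⟩ :
              SpecialLinearGroup (Fin 2) ℤ)}
          ∪ {A : SpecialLinearGroup (Fin 2) ℤ |
              0 < A 0 1 ∧ (m : ℤ) ∣ A 1 0 ∧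
                ∃ u ∈ H, ((u : (ZMod m)ˣ) : ZMod m) = ((A 1 1 : ℤ) : ZMod m)}) :
        Set (SpecialLinearGroup (Fin 2) ℤ))
      = {A : SpecialLinearGroup (Fin 2) ℤ |
          (m : ℤ) ∣ A 1 0 ∧
            ∃ u ∈ H, ((u : (ZMod m)ˣ) : ZMod m) = ((A 1 1 : ℤ) : ZMod m)} := by
  have hKcoe : (Kgrp m H : Set (SpecialLinearGroup (Fin 2) ℤ))
      = {A : SpecialLinearGroup (Fin 2) ℤ |
          (m : ℤ) ∣ A 1 0 ∧
            ∃ u ∈ H, ((u : (ZMod m)ˣ) : ZMod m) = ((A 1 1 : ℤ) : ZMod m)} := rfl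
  rw [← hKcoe, SetLike.coe_set_eq]
  apply le_antisymm
  · rw [Subgroup.closure_le]
    rintro x ((hx | hx) | hx)
    · obtain rfl : x = _ := hx
      refine ⟨?_, 1, H.one_mem, ?_⟩
      · show (m : ℤ) ∣ (!![1, 0; (m : ℤ), 1]) 1 0
        simp
      · show _ = (((!![1, 0; (m : ℤ), 1]) 1 1 : ℤ) : ZMod m)
        simp
    · obtain rfl : x = _ := hx
      refine ⟨?_, -1, hneg, ?_⟩
      · show (m : ℤ) ∣ ((-1 : Matrix (Fin 2) (Fin 2) ℤ)) 1 0
        simp [Matrix.one_apply]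
      · show _ = ((((-1 : Matrix (Fin 2) (Fin 2) ℤ)) 1 1 : ℤ) : ZMod m)
        simp [Matrix.one_apply]
    · exact ⟨hx.2.1, hx.2.2⟩
  · rintro A ⟨hd, u, hu, hcu⟩
    exact key_lemma m H hneg _ (Or.inl (Or.inl rfl)) (Or.inl (Or.inr rfl))
      (Set.subset_union_right) A hd ⟨u, hu, hcu⟩
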